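/- Let K₁, K₂ be invertible real 3×3 matrices, R a real 3×3 matrix, t, n ∈ ℝ³, and h ≠ 0. Let H = K₂ (R + (1/h) t nᵀ) K₁⁻¹ be the plane-induced homography and F = K₂⁻ᵀ ⌊t⌋ₓ R K₁⁻¹ the fundamental matrix. Then Hᵀ F is skew-symmetric: (Hᵀ F)ᵀ = −(Hᵀ F). -/
import Mathlib


open Matrix

/-- The skew-symmetric matrix `⌊a⌋ₓ` of a vector `a ∈ ℝ³`, so that `⌊a⌋ₓ v = a × v`. -/
def skew3 (a : Fin 3 → ℝ) : Matrix (Fin 3) (Fin 3) ℝ :=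
  !![0, -a 2, a 1; a 2, 0, -a 0; -a 1, a 0, 0]

lemma skew3_transpose (a : Fin 3 → ℝ) : (skew3 a)ᵀ = -(skew3 a) := by
  ext i j
  fin_cases i <;> fin_cases j <;> simp [skew3]

lemma vecMulVec_mul_skew3 (n t : Fin 3 → ℝ) :
    vecMulVec n t * skew3 t = 0 := by
  ext i j
  fin_cases j <;>
    simp [Matrix.mul_apply, Fin.sum_univ_three, skew3, vecMulVec_apply] <;> ring

/-- For the plane-induced homography `H = K₂ (R + (1/h) t nᵀ) K₁⁻¹` and the fundamental
matrix `F = K₂⁻ᵀ ⌊t⌋ₓ R K₁⁻¹`, the product `Hᵀ F` is skew-symmetric. -/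
theorem homography_fundamental_skew
    (K₁ K₂ : Matrix (Fin 3) (Fin 3) ℝ) (hK₁ : IsUnit K₁.det) (hK₂ : IsUnit K₂.det)
    (R : Matrix (Fin 3) (Fin 3) ℝ) (t n : Fin 3 → ℝ) (h : ℝ) (hh : h ≠ 0)
    (H : Matrix (Fin 3) (Fin 3) ℝ) (hH : H = K₂ * (R + h⁻¹ • vecMulVec t n) * K₁⁻¹)
    (F : Matrix (Fin 3) (Fin 3) ℝ) (hF : F = (K₂ᵀ)⁻¹ * skew3 t * R * K₁⁻¹) :
    (Hᵀ * F)ᵀ = -(Hᵀ * F) := by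
  have hK₂T : IsUnit (K₂ᵀ).det := by simpa [Matrix.det_transpose] using hK₂
  have hT : (vecMulVec t n)ᵀ = vecMulVec n t := by
    ext i j; simp [vecMulVec_apply, mul_comm]
  have hHt : Hᵀ = (K₁⁻¹)ᵀ * (Rᵀ + h⁻¹ • vecMulVec n t) * K₂ᵀ := by
    simp [hH, Matrix.transpose_mul, Matrix.transpose_add, Matrix.transpose_smul, hT,
      Matrix.mul_assoc]
  have key : Hᵀ * F = (K₁⁻¹)ᵀ * (Rᵀ * skew3 t * R) * K₁⁻¹ := by
    rw [hHt, hF]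
    have h1 : K₂ᵀ * ((K₂ᵀ)⁻¹ * skew3 t * R * K₁⁻¹) = skew3 t * R * K₁⁻¹ := by
      rw [show (K₂ᵀ)⁻¹ * skew3 t * R * K₁⁻¹ = (K₂ᵀ)⁻¹ * (skew3 t * R * K₁⁻¹) by
        simp [Matrix.mul_assoc], ← Matrix.mul_assoc, Matrix.mul_nonsing_inv _ hK₂T,
        Matrix.one_mul]
    rw [Matrix.mul_assoc, h1]
    have h2 : (Rᵀ + h⁻¹ • vecMulVec n t) * skew3 t = Rᵀ * skew3 t := by
      rw [Matrix.add_mul, Matrix.smul_mul, vecMulVec_mul_skew3, smul_zero, add_zero]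
    calc (K₁⁻¹)ᵀ * (Rᵀ + h⁻¹ • vecMulVec n t) * (skew3 t * R * K₁⁻¹)
        = (K₁⁻¹)ᵀ * ((Rᵀ + h⁻¹ • vecMulVec n t) * skew3 t) * (R * K₁⁻¹) := by
          simp [Matrix.mul_assoc]
      _ = (K₁⁻¹)ᵀ * (Rᵀ * skew3 t * R) * K₁⁻¹ := by rw [h2]; simp [Matrix.mul_assoc]
  rw [key]
  simp [Matrix.transpose_mul, skew3_transpose, Matrix.mul_assoc, Matrix.neg_mul,
    Matrix.mul_neg]
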